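/- Let n ≥ 1 be an integer, let δ > 1, λ > 0, R > 0 and C₀ > 0. Define Φ : [0,∞) → ℝ by Φ(s) = 1 − ( ḡ(λ)/ḡ(λ+s) )^{(δ−1)/(q−1)}, and let Φ′ denote its derivative. Then there exist constants c₁, c₂ > 0, depending only on p, q, δ and C₀, such that for all v ≥ 0, all η ∈ [0,1], all nonzero vectors ξ ∈ ℝⁿ, and all vectors e ∈ ℝⁿ with ‖e‖ ≤ C₀/R, one has (‖ξ‖^{p−2} + ‖ξ‖^{q−2}) · ⟨ξ, Φ′(v)·(ξ/R)·η^q + q·Φ(v)·η^{q−1}·e⟩ ≥ (c₁/R) · ( ḡ(λ)/ḡ(λ+v) )^{(δ−1)/(q−1)} · ( G(‖ξ‖)/(λ+v) ) · η^q − (c₂/R) · ḡ(λ) · ( ḡ(λ+v)/ḡ(λ) )^{δ}. -/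

import Mathlib

open Real
open scoped RealInnerProductSpace

/-- `G(t) = t^p/p + t^q/q` -/
noncomputable def G (p q t : ℝ) : ℝ := t ^ p / p + t ^ q / q

/-- `ḡ(t) = G(t)/t = t^(p-1)/p + t^(q-1)/q` (for `t > 0`) -/
noncomputable def gbar (p q t : ℝ) : ℝ := t ^ (p - 1) / p + t ^ (q - 1) / q

/-- `Φ(s) = 1 − (ḡ(λ)/ḡ(λ+s))^((δ−1)/(q−1))` -/
noncomputable def Phi (p q δ lam : ℝ) (s : ℝ) : ℝ :=
  1 - (gbar p q lam / gbar p q (lam + s)) ^ ((δ - 1) / (q - 1))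

section AuxLemmas

variable {p q : ℝ}

lemma gbar_pos (hp : 1 < p) (hpq : p ≤ q) {t : ℝ} (ht : 0 < t) : 0 < gbar p q t := by
  have hq : (0:ℝ) < q := by linarith
  have h1 : 0 < t ^ (p - 1) := Real.rpow_pos_of_pos ht _
  have h2 : 0 < t ^ (q - 1) := Real.rpow_pos_of_pos ht _
  have : 0 < t ^ (p - 1) / p := div_pos h1 (by linarith)
  have : 0 < t ^ (q - 1) / q := div_pos h2 hq
  unfold gbar; positivity

lemma gbar_mono (hp : 1 < p) (hpq : p ≤ q) {s t : ℝ} (hs : 0 < s) (hst : s ≤ t) :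
    gbar p q s ≤ gbar p q t := by
  have h1 : s ^ (p - 1) ≤ t ^ (p - 1) := Real.rpow_le_rpow hs.le hst (by linarith)
  have h2 : s ^ (q - 1) ≤ t ^ (q - 1) := Real.rpow_le_rpow hs.le hst (by linarith)
  unfold gbar
  gcongr <;> linarith

lemma G_pos (hp : 1 < p) (hpq : p ≤ q) {t : ℝ} (ht : 0 < t) : 0 < G p q t := by
  have hq : (0:ℝ) < q := by linarith
  have h1 : 0 < t ^ p := Real.rpow_pos_of_pos ht _
  have h2 : 0 < t ^ q := Real.rpow_pos_of_pos ht _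
  have : 0 < t ^ p / p := div_pos h1 (by linarith)
  have : 0 < t ^ q / q := div_pos h2 hq
  unfold G; positivity

/-- Young-type inequality with a scaling parameter. -/
lemma young_eps (hq : 1 < q) {ε K x y : ℝ} (hε : 0 < ε) (hK : 0 < K) (hx : 0 ≤ x) (hy : 0 ≤ y) :
    x ^ (q-1) * y ≤ ε * K * x ^ q + ε ^ (1-q) * K ^ (1-q) * y ^ q := by
  have hq1 : (0:ℝ) < q - 1 := by linarith
  have hq0 : (0:ℝ) < q := by linarith
  have hconj : (q/(q-1)).HolderConjugate q :=
    ⟨by rw [inv_div]; field_simp; ring, div_pos hq0 hq1, hq0⟩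
  set E := ε * K with hE
  have hE0 : 0 < E := mul_pos hε hK
  have hxq : (0:ℝ) ≤ x ^ (q-1) := Real.rpow_nonneg hx _
  have hEp : (0:ℝ) ≤ E ^ ((q-1)/q) := Real.rpow_nonneg hE0.le _
  have hEn : (0:ℝ) ≤ E ^ (-((q-1)/q)) := Real.rpow_nonneg hE0.le _
  have ha : 0 ≤ x ^ (q-1) * E ^ ((q-1)/q) := mul_nonneg hxq hEp
  have hb : 0 ≤ y * E ^ (-((q-1)/q)) := mul_nonneg hy hEn
  have hyoung := Real.young_inequality_of_nonneg ha hb hconj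
  have hab : x ^ (q-1) * E ^ ((q-1)/q) * (y * E ^ (-((q-1)/q))) = x ^ (q-1) * y := by
    have h1 : E ^ ((q-1)/q) * E ^ (-((q-1)/q)) = 1 := by
      rw [← Real.rpow_add hE0]; simp
    calc x ^ (q-1) * E ^ ((q-1)/q) * (y * E ^ (-((q-1)/q)))
        = x ^ (q-1) * y * (E ^ ((q-1)/q) * E ^ (-((q-1)/q))) := by ring
      _ = x ^ (q-1) * y := by rw [h1, mul_one]
  have hA : (x ^ (q-1) * E ^ ((q-1)/q)) ^ (q/(q-1)) = x ^ q * E := by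
    rw [Real.mul_rpow hxq hEp, ← Real.rpow_mul hx, ← Real.rpow_mul hE0.le]
    rw [show (q-1) * (q/(q-1)) = q by field_simp, show (q-1)/q * (q/(q-1)) = 1 by field_simp]
    rw [Real.rpow_one]
  have hB : (y * E ^ (-((q-1)/q))) ^ q = y ^ q * E ^ (1-q) := by
    rw [Real.mul_rpow hy hEn, ← Real.rpow_mul hE0.le]
    congr 2
    field_simp
    ring
  rw [hab, hA, hB] at hyoung
  have hq' : (1:ℝ) ≤ q/(q-1) := hconj.lt.le
  have h1 : x ^ q * E / (q/(q-1)) ≤ x ^ q * E :=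
    div_le_self (by positivity) hq'
  have h2 : y ^ q * E ^ (1-q) / q ≤ y ^ q * E ^ (1-q) := by
    apply div_le_self _ (by linarith)
    exact mul_nonneg (Real.rpow_nonneg hy _) (Real.rpow_nonneg hE0.le _)
  have hEmul : E ^ (1-q) = ε ^ (1-q) * K ^ (1-q) := Real.mul_rpow hε.le hK.le
  calc x ^ (q-1) * y ≤ x ^ q * E / (q/(q-1)) + y ^ q * E ^ (1-q) / q := hyoung
    _ ≤ x ^ q * E + y ^ q * E ^ (1-q) := add_le_add h1 h2
    _ = ε * K * x ^ q + ε ^ (1-q) * K ^ (1-q) * y ^ q := by rw [hEmul, hE]; ring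
lemma hasDerivAt_gbar (hp : 1 < p) (hpq : p ≤ q) {t : ℝ} (ht : 0 < t) :
    HasDerivAt (gbar p q) ((p-1) * t ^ (p-2) / p + (q-1) * t ^ (q-2) / q) t := by
  have h1 : HasDerivAt (fun x : ℝ => x ^ (p-1)) ((p-1) * t ^ (p-1-1)) t :=
    Real.hasDerivAt_rpow_const (Or.inl ht.ne')
  have h2 : HasDerivAt (fun x : ℝ => x ^ (q-1)) ((q-1) * t ^ (q-1-1)) t :=
    Real.hasDerivAt_rpow_const (Or.inl ht.ne')
  have := (h1.div_const p).add (h2.div_const q)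
  convert this using 2 <;> first | rfl | ring_nf

private lemma alg_aux {c u u' M W : ℝ} (hu : u ≠ 0) (hc : c ≠ 0) :
    -((0 * u - c * (u' * 1)) / u ^ 2 * M * (W * (u / c))) = M * W * (u' / u) := by
  field_simp
  ring

/-- lower bound on the derivative of Phi -/
lemma deriv_Phi_ge (hp : 1 < p) (hpq : p ≤ q) {δ lam v : ℝ} (hδ : 1 < δ)
    (hlam : 0 < lam) (hv : 0 ≤ v) :
    ((δ-1)/(q-1)) * (p-1) * ((gbar p q lam / gbar p q (lam+v)) ^ ((δ-1)/(q-1))) / (lam+v)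
      ≤ deriv (Phi p q δ lam) v := by
  have hs : 0 < lam + v := by linarith
  set u' : ℝ := (p-1) * (lam+v) ^ (p-2) / p + (q-1) * (lam+v) ^ (q-2) / q with hu'def
  have hu : 0 < gbar p q (lam+v) := gbar_pos hp hpq hs
  have hc : 0 < gbar p q lam := gbar_pos hp hpq hlam
  have hAdd : HasDerivAt (fun s : ℝ => gbar p q (lam + s)) (u' * 1) v :=
    (hasDerivAt_gbar hp hpq hs).comp v ((hasDerivAt_id v).const_add lam)
  have hw : HasDerivAt (fun s : ℝ => gbar p q lam / gbar p q (lam + s))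
      ((0 * gbar p q (lam+v) - gbar p q lam * (u' * 1)) / (gbar p q (lam+v))^2) v :=
    (hasDerivAt_const v (gbar p q lam)).div hAdd hu.ne'
  have hwv : 0 < gbar p q lam / gbar p q (lam + v) := div_pos hc hu
  have hr : HasDerivAt (fun s : ℝ => (gbar p q lam / gbar p q (lam + s)) ^ ((δ-1)/(q-1)))
      ((0 * gbar p q (lam+v) - gbar p q lam * (u' * 1)) / (gbar p q (lam+v))^2 * ((δ-1)/(q-1)) *
        (gbar p q lam / gbar p q (lam+v)) ^ ((δ-1)/(q-1) - 1)) v :=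
    hw.rpow_const (Or.inl hwv.ne')
  have hD : HasDerivAt (Phi p q δ lam)
      (-((0 * gbar p q (lam+v) - gbar p q lam * (u' * 1)) / (gbar p q (lam+v))^2 * ((δ-1)/(q-1)) *
        (gbar p q lam / gbar p q (lam+v)) ^ ((δ-1)/(q-1) - 1))) v := hr.const_sub 1
  rw [hD.deriv]
  set W : ℝ := (gbar p q lam / gbar p q (lam+v)) ^ ((δ-1)/(q-1)) with hW
  have hpow : (gbar p q lam / gbar p q (lam+v)) ^ ((δ-1)/(q-1) - 1)
      = W * (gbar p q (lam+v) / gbar p q lam) := by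
    rw [hW, Real.rpow_sub hwv, Real.rpow_one]
    field_simp
  have hiden : -((0 * gbar p q (lam+v) - gbar p q lam * (u' * 1)) / (gbar p q (lam+v))^2 *
        ((δ-1)/(q-1)) * (gbar p q lam / gbar p q (lam+v)) ^ ((δ-1)/(q-1) - 1))
      = ((δ-1)/(q-1)) * W * (u' / gbar p q (lam+v)) := by
    rw [hpow]
    rw [show -((0 * gbar p q (lam+v) - gbar p q lam * (u' * 1)) / (gbar p q (lam+v))^2 *
        ((δ-1)/(q-1)) * (W * (gbar p q (lam+v) / gbar p q lam)))
      = -((0 * gbar p q (lam+v) - gbar p q lam * (u' * 1)) / (gbar p q (lam+v))^2 *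
        ((δ-1)/(q-1)) * (W * (gbar p q (lam+v) / gbar p q lam))) from rfl]
    exact alg_aux hu.ne' hc.ne'
  rw [hiden]
  -- now: M*(p-1)*W/(lam+v) ≤ M*W*(u'/u)
  have hW0 : 0 < W := Real.rpow_pos_of_pos hwv _
  have hM : 0 < (δ-1)/(q-1) := div_pos (by linarith) (by linarith)
  have hq1 : 0 < q := by linarith
  have hupos : 0 ≤ (q-1) * (lam+v) ^ (q-2) / q :=
    div_nonneg (mul_nonneg (by linarith) (Real.rpow_nonneg hs.le _)) hq1.le
  have hkey : (p-1) * gbar p q (lam+v) ≤ u' * (lam + v) := by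
    have e1 : (lam+v) ^ (p-2) * (lam+v) = (lam+v) ^ (p-1) := by
      rw [show p - 1 = (p-2) + 1 by ring, Real.rpow_add_one hs.ne']
    have e2 : (lam+v) ^ (q-2) * (lam+v) = (lam+v) ^ (q-1) := by
      rw [show q - 1 = (q-2) + 1 by ring, Real.rpow_add_one hs.ne']
    have heq : u' * (lam+v)
        = (p-1) * ((lam+v)^(p-2)*(lam+v)) / p + (q-1) * ((lam+v)^(q-2)*(lam+v)) / q := by
      rw [hu'def]; ring
    rw [e1, e2] at heq
    rw [heq]
    unfold gbar
    have h2 : (p-1) * ((lam+v)^(q-1)/q) ≤ (q-1) * (lam+v)^(q-1) / q := by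
      rw [mul_div_assoc]
      exact mul_le_mul_of_nonneg_right (by linarith)
        (div_nonneg (Real.rpow_nonneg hs.le _) hq1.le)
    have h3 : (p-1) * ((lam+v)^(p-1)/p + (lam+v)^(q-1)/q)
        = (p-1) * ((lam+v)^(p-1)/p) + (p-1) * ((lam+v)^(q-1)/q) := by ring
    rw [h3]
    have h4 : (p-1) * ((lam+v)^(p-1)/p) = (p-1) * (lam+v)^(p-1) / p := by ring
    linarith
  have hfrac : (p-1) / (lam+v) ≤ u' / gbar p q (lam+v) := by
    rw [div_le_div_iff₀ hs hu]
    linarith [hkey]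
  calc ((δ-1)/(q-1)) * (p-1) * W / (lam+v)
      = ((δ-1)/(q-1)) * W * ((p-1) / (lam+v)) := by ring
    _ ≤ ((δ-1)/(q-1)) * W * (u' / gbar p q (lam+v)) := by
        apply mul_le_mul_of_nonneg_left hfrac (by positivity)

lemma sum_le_q_gbar (hp : 1 < p) (hpq : p ≤ q) {s : ℝ} (hs : 0 ≤ s) :
    s ^ (p-1) + s ^ (q-1) ≤ q * gbar p q s := by
  unfold gbar
  have hp0 : (0:ℝ) < p := by linarith
  have hq0 : q ≠ 0 := by intro h; rw [h] at hpq; linarith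
  have h1 : s ^ (p-1) ≤ q * (s ^ (p-1) / p) := by
    rw [mul_div_assoc', le_div_iff₀ hp0]
    nlinarith [Real.rpow_nonneg hs (p-1)]
  have h2 : s ^ (q-1) = q * (s ^ (q-1) / q) := by
    field_simp
  linarith [h1, h2.le]

/-- Case t ≤ s : g(t) ≤ q ḡ(s) -/
lemma g_le_of_le (hp : 1 < p) (hpq : p ≤ q) {s t : ℝ} (ht : 0 ≤ t) (hts : t ≤ s) :
    t ^ (p-1) + t ^ (q-1) ≤ q * gbar p q s := by
  have h1 : t ^ (p-1) ≤ s ^ (p-1) := Real.rpow_le_rpow ht hts (by linarith)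
  have h2 : t ^ (q-1) ≤ s ^ (q-1) := Real.rpow_le_rpow ht hts (by linarith)
  have := sum_le_q_gbar hp hpq (ht.trans hts)
  linarith

/-- Case s ≤ t : g(t)^q ≤ q^q ḡ(s) (G(t)/s)^(q-1) -/
lemma g_pow_le_of_ge (hp : 1 < p) (hpq : p ≤ q) {s t : ℝ} (hs : 0 < s) (hst : s ≤ t) :
    (t ^ (p-1) + t ^ (q-1)) ^ q ≤ q ^ q * gbar p q s * (G p q t / s) ^ (q-1) := by
  have ht : 0 < t := hs.trans_le hst
  have hq0 : (0:ℝ) < q := by linarith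
  have hq1 : (0:ℝ) ≤ q - 1 := by linarith
  set gt : ℝ := t ^ (p-1) + t ^ (q-1) with hgt
  have hgt0 : 0 < gt := by
    have := Real.rpow_pos_of_pos ht (p-1); have := Real.rpow_pos_of_pos ht (q-1); positivity
  set x : ℝ := t / s with hx
  have hx1 : 1 ≤ x := (one_le_div hs).mpr hst
  have hx0 : 0 ≤ x := by linarith
  -- Step A : gt ≤ q * gbar s * x^(q-1)
  have haux1 : s ^ (q-1) * x ^ (q-1) = t ^ (q-1) := by
    rw [hx, Real.div_rpow ht.le hs.le]
    field_simp
  have haux2 : s ^ (p-1) * x ^ (p-1) = t ^ (p-1) := by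
    rw [hx, Real.div_rpow ht.le hs.le]
    field_simp
  have hxmono : x ^ (p-1) ≤ x ^ (q-1) :=
    Real.rpow_le_rpow_of_exponent_le hx1 (by linarith)
  have hA : gt ≤ (s ^ (p-1) + s ^ (q-1)) * x ^ (q-1) := by
    have h1 : t ^ (p-1) ≤ s ^ (p-1) * x ^ (q-1) := by
      rw [← haux2]
      exact mul_le_mul_of_nonneg_left hxmono (Real.rpow_nonneg hs.le _)
    have h2 : t ^ (q-1) = s ^ (q-1) * x ^ (q-1) := haux1.symm
    rw [hgt, add_mul]
    linarith
  have hA' : gt ≤ q * gbar p q s * x ^ (q-1) := by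
    refine hA.trans ?_
    exact mul_le_mul_of_nonneg_right (sum_le_q_gbar hp hpq hs.le) (Real.rpow_nonneg hx0 _)
  -- Step B : t * gt / q ≤ G p q t
  have hB : t * gt / q ≤ G p q t := by
    have e1 : t ^ p = t ^ (p-1) * t := by
      nth_rewrite 1 [show p = (p-1) + 1 by ring]
      rw [Real.rpow_add_one ht.ne']
    have e2 : t ^ q = t ^ (q-1) * t := by
      nth_rewrite 1 [show q = (q-1) + 1 by ring]
      rw [Real.rpow_add_one ht.ne']
    unfold G
    have hp0 : (0:ℝ) < p := by linarith
    have h1 : t ^ p / q ≤ t ^ p / p := by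
      rw [div_eq_mul_inv, div_eq_mul_inv]
      exact mul_le_mul_of_nonneg_left (inv_anti₀ hp0 hpq) (Real.rpow_nonneg ht.le _)
    have h2 : t * gt / q = t ^ p / q + t ^ q / q := by
      rw [hgt, e1, e2]; ring
    linarith
  -- Step C : combine
  have hGs : t * gt / (q * s) ≤ G p q t / s := by
    have h := (div_le_div_iff_of_pos_right hs).mpr hB
    rwa [div_div] at h
  have hpos : 0 ≤ t * gt / (q * s) := by positivity
  have hC : (t * gt / (q * s)) ^ (q-1) ≤ (G p q t / s) ^ (q-1) :=
    Real.rpow_le_rpow hpos hGs hq1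
  have hrw : t * gt / (q * s) = x * gt * q⁻¹ := by
    rw [hx]; field_simp
  have hexp : (x * gt * q⁻¹) ^ (q-1) = x ^ (q-1) * gt ^ (q-1) * (q ^ (q-1))⁻¹ := by
    rw [Real.mul_rpow (mul_nonneg hx0 hgt0.le) (inv_nonneg.mpr hq0.le),
      Real.mul_rpow hx0 hgt0.le, Real.inv_rpow hq0.le]
  have egt : gt ^ q = gt * gt ^ (q-1) := by
    nth_rewrite 1 [show q = 1 + (q-1) by ring]
    rw [Real.rpow_add hgt0, Real.rpow_one]
  have eqq : q ^ q = q ^ (q-1) * q := by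
    rw [← Real.rpow_add_one (ne_of_gt hq0)]
    congr 1; ring
  have hqq1 : (0:ℝ) < q ^ (q-1) := Real.rpow_pos_of_pos hq0 _
  have hgb : 0 < gbar p q s := by
    have h1 : 0 < s ^ (p - 1) := Real.rpow_pos_of_pos hs _
    have h2 : 0 < s ^ (q - 1) := Real.rpow_pos_of_pos hs _
    have hp0 : (0:ℝ) < p := by linarith
    unfold gbar; positivity
  have hfin : q ^ q * gbar p q s * (x ^ (q-1) * gt ^ (q-1) * (q ^ (q-1))⁻¹)
      = (q * gbar p q s * x ^ (q-1)) * gt ^ (q-1) := by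
    rw [eqq]; field_simp
  calc (t ^ (p-1) + t ^ (q-1)) ^ q = gt * gt ^ (q-1) := egt
    _ ≤ (q * gbar p q s * x ^ (q-1)) * gt ^ (q-1) :=
        mul_le_mul_of_nonneg_right hA' (Real.rpow_nonneg hgt0.le _)
    _ = q ^ q * gbar p q s * (x * gt * q⁻¹) ^ (q-1) := by rw [hexp, hfin]
    _ = q ^ q * gbar p q s * (t * gt / (q * s)) ^ (q-1) := by rw [hrw]
    _ ≤ q ^ q * gbar p q s * (G p q t / s) ^ (q-1) := by
        apply mul_le_mul_of_nonneg_left hC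
        positivity

end AuxLemmas

section Absorb
variable {p q : ℝ}

/-- The absorption inequality: error term controlled by main term plus constant term. -/
lemma absorb (hp : 1 < p) (hpq : p ≤ q) {δ C₀ lam v t η : ℝ} (hδ : 1 < δ) (hC₀ : 0 < C₀)
    (hlam : 0 < lam) (hv : 0 ≤ v) (ht : 0 < t) (hη0 : 0 ≤ η) (hη1 : η ≤ 1) :
    q * C₀ * (t ^ (p-1) + t ^ (q-1)) * η ^ (q-1) ≤
      (((δ-1)/(q-1)) * (p-1) / 2) *
        ((gbar p q lam / gbar p q (lam+v)) ^ ((δ-1)/(q-1)) * (G p q t / (lam+v))) * η ^ q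
      + (q^2 * C₀ + (((δ-1)/(q-1)) * (p-1) / 2) ^ (1-q) * (q*C₀) ^ q * q ^ q) *
          (gbar p q lam * (gbar p q (lam+v) / gbar p q lam) ^ δ) := by
  have hq : 1 < q := lt_of_lt_of_le hp hpq
  have hq0 : (0:ℝ) < q := by linarith
  have hs : 0 < lam + v := by linarith
  have hc : 0 < gbar p q lam := gbar_pos hp hpq hlam
  have hu : 0 < gbar p q (lam+v) := gbar_pos hp hpq hs
  have hcu : gbar p q lam ≤ gbar p q (lam+v) :=
    gbar_mono hp hpq hlam (le_add_of_nonneg_right hv)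
  set c : ℝ := gbar p q lam with hcdef
  set u : ℝ := gbar p q (lam+v) with hudef
  set M : ℝ := (δ-1)/(q-1) with hMdef
  have hM : 0 < M := div_pos (by linarith) (by linarith)
  set ε : ℝ := M * (p-1) / 2 with hεdef
  have hε : 0 < ε := by rw [hεdef]; exact div_pos (mul_pos hM (by linarith)) two_pos
  have hGt : 0 < G p q t := G_pos hp hpq ht
  set Gt : ℝ := G p q t with hGtdef
  have hcu0 : 0 < c/u := div_pos hc hu
  set a : ℝ := (c/u) ^ M with hadef
  have ha : 0 < a := Real.rpow_pos_of_pos hcu0 _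
  set K : ℝ := a * (Gt / (lam+v)) with hKdef
  have hK : 0 < K := by rw [hKdef]; positivity
  have hgt : 0 < t ^ (p-1) + t ^ (q-1) := by
    have := Real.rpow_pos_of_pos ht (p-1); have := Real.rpow_pos_of_pos ht (q-1); linarith
  set gt : ℝ := t ^ (p-1) + t ^ (q-1) with hgtdef
  set Z : ℝ := c * (u/c) ^ δ with hZdef
  have huc1 : 1 ≤ u / c := (one_le_div hc).mpr hcu
  have huc0 : 0 < u / c := div_pos hu hc
  have hZalt : Z = u * (u/c) ^ (δ-1) := by
    have h1 : (u/c) ^ δ = (u/c) * (u/c) ^ (δ-1) := by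
      nth_rewrite 1 [show δ = 1 + (δ-1) by ring]
      rw [Real.rpow_add huc0, Real.rpow_one]
    rw [hZdef, h1]
    field_simp
  have hZpos : 0 < Z := by rw [hZdef]; positivity
  have hucd : 1 ≤ (u/c) ^ (δ-1) := by
    have := Real.rpow_le_rpow zero_le_one huc1 (by linarith : (0:ℝ) ≤ δ-1)
    rwa [Real.one_rpow] at this
  have hZge_u : u ≤ Z := by
    rw [hZalt]
    nth_rewrite 1 [← mul_one u]
    exact mul_le_mul_of_nonneg_left hucd hu.le
  set C₂ : ℝ := q^2 * C₀ + ε ^ (1-q) * (q*C₀) ^ q * q ^ q with hC₂def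
  have hcoef : 0 ≤ ε ^ (1-q) * (q*C₀) ^ q * q ^ q := by positivity
  rcases le_total t (lam+v) with hts | hst
  · -- easy case t ≤ lam+v
    have h1 : gt ≤ q * u := g_le_of_le hp hpq ht.le hts
    have hη' : η ^ (q-1) ≤ 1 := Real.rpow_le_one hη0 hη1 (by linarith)
    have h2 : gt * η ^ (q-1) ≤ (q*u) * 1 :=
      mul_le_mul h1 hη' (Real.rpow_nonneg hη0 _) (by positivity)
    have h3 : q*C₀*gt*η^(q-1) ≤ q^2*C₀*Z := by
      calc q*C₀*gt*η^(q-1) = (q*C₀)*(gt*η^(q-1)) := by ring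
        _ ≤ (q*C₀)*((q*u)*1) := mul_le_mul_of_nonneg_left h2 (by positivity)
        _ = q^2*C₀*u := by ring
        _ ≤ q^2*C₀*Z := mul_le_mul_of_nonneg_left hZge_u (by positivity)
    have h4 : q^2*C₀*Z ≤ C₂*Z := by
      apply mul_le_mul_of_nonneg_right _ hZpos.le
      linarith [hcoef]
    have h5 : 0 ≤ ε * K * η ^ q := by positivity
    linarith
  · -- hard case lam+v ≤ t : Young
    have hy0 : 0 ≤ q*C₀*gt := by positivity
    have hyoung := young_eps hq hε hK hη0 hy0
    have key2 : gt ^ q ≤ q ^ q * u * (Gt/(lam+v)) ^ (q-1) :=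
      g_pow_le_of_ge hp hpq hs hst
    have hP : 0 < (Gt/(lam+v)) ^ (q-1) := Real.rpow_pos_of_pos (div_pos hGt hs) _
    -- expand (q*C₀*gt)^q
    have e1 : (q*C₀*gt) ^ q = (q*C₀) ^ q * gt ^ q :=
      Real.mul_rpow (by positivity) hgt.le
    -- expand K^(1-q)
    have e2 : K ^ (1-q) = a ^ (1-q) * (Gt/(lam+v)) ^ (1-q) := by
      rw [hKdef]; exact Real.mul_rpow ha.le (by positivity)
    have e3 : a ^ (1-q) = (u/c) ^ (δ-1) := by
      rw [hadef, ← Real.rpow_mul hcu0.le]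
      have hq1ne : q - 1 ≠ 0 := ne_of_gt (by linarith)
      rw [show M * (1-q) = -(δ-1) by rw [hMdef]; field_simp; ring]
      rw [Real.rpow_neg hcu0.le, ← Real.inv_rpow hcu0.le, inv_div]
    have e4 : (Gt/(lam+v)) ^ (1-q) = ((Gt/(lam+v)) ^ (q-1))⁻¹ := by
      rw [show (1:ℝ)-q = -(q-1) by ring, Real.rpow_neg (by positivity)]
    have h6 : gt ^ q * ((Gt/(lam+v)) ^ (q-1))⁻¹ ≤ q ^ q * u := by
      rw [← div_eq_mul_inv, div_le_iff₀ hP]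
      linarith [key2]
    have h7 : ε ^ (1-q) * K ^ (1-q) * (q*C₀*gt) ^ q
        ≤ ε ^ (1-q) * (q*C₀) ^ q * q ^ q * Z := by
      rw [e1, e2, e3, e4]
      have h8 : (u/c) ^ (δ-1) * (gt ^ q * ((Gt/(lam+v)) ^ (q-1))⁻¹)
          ≤ (u/c) ^ (δ-1) * (q ^ q * u) :=
        mul_le_mul_of_nonneg_left h6 (by positivity)
      have h9 : (u/c) ^ (δ-1) * (q ^ q * u) = q ^ q * Z := by rw [hZalt]; ring
      calc ε ^ (1-q) * ((u/c) ^ (δ-1) * ((Gt/(lam+v)) ^ (q-1))⁻¹) * ((q*C₀) ^ q * gt ^ q)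
          = (ε ^ (1-q) * (q*C₀) ^ q) *
              ((u/c) ^ (δ-1) * (gt ^ q * ((Gt/(lam+v)) ^ (q-1))⁻¹)) := by ring
        _ ≤ (ε ^ (1-q) * (q*C₀) ^ q) * ((u/c) ^ (δ-1) * (q ^ q * u)) := by
            apply mul_le_mul_of_nonneg_left h8 (by positivity)
        _ = ε ^ (1-q) * (q*C₀) ^ q * q ^ q * Z := by rw [h9]; ring
    have h10 : q^2*C₀*Z ≥ 0 := by positivity
    have heq : q*C₀*gt*η^(q-1) = η^(q-1) * (q*C₀*gt) := by ring
    rw [heq]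
    calc η^(q-1) * (q*C₀*gt) ≤ ε*K*η^q + ε^(1-q)*K^(1-q)*(q*C₀*gt)^q := hyoung
      _ ≤ ε*K*η^q + ε^(1-q)*(q*C₀)^q*q^q*Z := by linarith [h7]
      _ ≤ ε*K*η^q + C₂*Z := by
          have hq2 : 0 ≤ q^2*C₀ := by positivity
          have h11 : ε^(1-q)*(q*C₀)^q*q^q*Z ≤ C₂*Z := by
            rw [hC₂def, add_mul]
            have := mul_nonneg hq2 hZpos.le
            linarith
          linarith
end Absorb

/-- Key pointwise inequality (Lemma 3.1 of the paper): there are constants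
`c₁, c₂ > 0` depending only on `p, q, δ, C₀` such that for all `v ≥ 0`,
`η ∈ [0,1]`, nonzero `ξ ∈ ℝⁿ`, and `e ∈ ℝⁿ` with `‖e‖ ≤ C₀/R`,
`(‖ξ‖^(p−2) + ‖ξ‖^(q−2)) ⟨ξ, Φ′(v)(ξ/R)η^q + qΦ(v)η^(q−1)e⟩
  ≥ (c₁/R)(ḡ(λ)/ḡ(λ+v))^((δ−1)/(q−1)) (G(‖ξ‖)/(λ+v)) η^q
    − (c₂/R) ḡ(λ) (ḡ(λ+v)/ḡ(λ))^δ`. -/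
theorem stmt13 (p q δ C₀ : ℝ) (hp : 1 < p) (hpq : p ≤ q) (hδ : 1 < δ) (hC₀ : 0 < C₀) :
    ∃ c₁ c₂ : ℝ, 0 < c₁ ∧ 0 < c₂ ∧
      ∀ (n : ℕ), 1 ≤ n →
      ∀ (lam R : ℝ), 0 < lam → 0 < R →
      ∀ (v : ℝ), 0 ≤ v →
      ∀ (η : ℝ), η ∈ Set.Icc (0 : ℝ) 1 →
      ∀ (ξ e : EuclideanSpace ℝ (Fin n)), ξ ≠ 0 → ‖e‖ ≤ C₀ / R →
        (‖ξ‖ ^ (p - 2) + ‖ξ‖ ^ (q - 2)) *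
            ⟪ξ, (deriv (Phi p q δ lam) v * η ^ q / R) • ξ +
                  (q * Phi p q δ lam v * η ^ (q - 1)) • e⟫ ≥
          c₁ / R * (gbar p q lam / gbar p q (lam + v)) ^ ((δ - 1) / (q - 1)) *
              (G p q ‖ξ‖ / (lam + v)) * η ^ q -
            c₂ / R * gbar p q lam * (gbar p q (lam + v) / gbar p q lam) ^ δ := by
  have hq : 1 < q := lt_of_lt_of_le hp hpq
  have hq0 : (0:ℝ) < q := by linarith
  have hM : (0:ℝ) < (δ-1)/(q-1) := div_pos (by linarith) (by linarith)
  have hc₁ : (0:ℝ) < ((δ-1)/(q-1)) * (p-1) / 2 := by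
    apply div_pos (mul_pos hM (by linarith)) two_pos
  have hc₂ : (0:ℝ) < q^2 * C₀ + (((δ-1)/(q-1)) * (p-1) / 2) ^ (1-q) * (q*C₀) ^ q * q ^ q := by
    have h1 : (0:ℝ) < (((δ-1)/(q-1)) * (p-1) / 2) ^ (1-q) := Real.rpow_pos_of_pos hc₁ _
    have h2 : (0:ℝ) < (q*C₀) ^ q := Real.rpow_pos_of_pos (by positivity) _
    have h3 : (0:ℝ) < q ^ q := Real.rpow_pos_of_pos hq0 _
    positivity
  refine ⟨((δ-1)/(q-1)) * (p-1) / 2,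
    q^2 * C₀ + (((δ-1)/(q-1)) * (p-1) / 2) ^ (1-q) * (q*C₀) ^ q * q ^ q,
    hc₁, hc₂, ?_⟩
  intro n hn lam R hlam hR v hv η hη ξ e hξ he
  obtain ⟨hη0, hη1⟩ := hη
  have hs : 0 < lam + v := by linarith
  have ht : 0 < ‖ξ‖ := norm_pos_iff.mpr hξ
  have hc : 0 < gbar p q lam := gbar_pos hp hpq hlam
  have hu : 0 < gbar p q (lam+v) := gbar_pos hp hpq hs
  have hcu : gbar p q lam ≤ gbar p q (lam+v) :=
    gbar_mono hp hpq hlam (le_add_of_nonneg_right hv)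
  have hGt : 0 < G p q ‖ξ‖ := G_pos hp hpq ht
  -- expand the inner product
  rw [inner_add_right, real_inner_smul_right, real_inner_smul_right,
    real_inner_self_eq_norm_mul_norm]
  set t : ℝ := ‖ξ‖ with htdef
  set D : ℝ := deriv (Phi p q δ lam) v with hDdef
  set ip : ℝ := ⟪ξ, e⟫ with hipdef
  set a : ℝ := (gbar p q lam / gbar p q (lam+v)) ^ ((δ-1)/(q-1)) with hadef
  have ha : 0 < a := Real.rpow_pos_of_pos (div_pos hc hu) _
  -- rpow arithmetic for powers of t
  have ep1 : t ^ (p-2) * t = t ^ (p-1) := by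
    rw [← Real.rpow_add_one ht.ne']; congr 1; ring
  have ep2 : t ^ (p-1) * t = t ^ p := by
    rw [← Real.rpow_add_one ht.ne']; congr 1; ring
  have eq1 : t ^ (q-2) * t = t ^ (q-1) := by
    rw [← Real.rpow_add_one ht.ne']; congr 1; ring
  have eq2 : t ^ (q-1) * t = t ^ q := by
    rw [← Real.rpow_add_one ht.ne']; congr 1; ring
  have hApow : (t ^ (p-2) + t ^ (q-2)) * (t * t) = t ^ p + t ^ q := by
    have h1 : t ^ (p-2) * (t * t) = t ^ p := by
      rw [← mul_assoc, ep1, ep2]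
    have h2 : t ^ (q-2) * (t * t) = t ^ q := by
      rw [← mul_assoc, eq1, eq2]
    rw [add_mul, h1, h2]
  have hAt : (t ^ (p-2) + t ^ (q-2)) * t = t ^ (p-1) + t ^ (q-1) := by
    rw [add_mul, ep1, eq1]
  have hA0 : 0 ≤ t ^ (p-2) + t ^ (q-2) := by positivity
  -- bound on D from below
  have hD : ((δ-1)/(q-1)) * (p-1) * a / (lam+v) ≤ D := deriv_Phi_ge hp hpq hδ hlam hv
  have hD0 : 0 ≤ D :=
    le_trans (le_of_lt (div_pos (mul_pos (mul_pos hM (by linarith)) ha) hs)) hD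
  -- Term 1 lower bound
  have hGle : G p q t ≤ t ^ p + t ^ q := by
    unfold G
    have h1 : t ^ p / p ≤ t ^ p := div_le_self (Real.rpow_nonneg ht.le _) (by linarith)
    have h2 : t ^ q / q ≤ t ^ q := div_le_self (Real.rpow_nonneg ht.le _) (by linarith)
    linarith
  have hT1 : (((δ-1)/(q-1)) * (p-1) * a / (lam+v)) * G p q t * (η ^ q / R)
      ≤ D * η ^ q / R * ((t ^ (p-2) + t ^ (q-2)) * (t * t)) := by
    rw [hApow]
    have h1 : (((δ-1)/(q-1)) * (p-1) * a / (lam+v)) * G p q t ≤ D * (t ^ p + t ^ q) :=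
      mul_le_mul hD hGle hGt.le hD0
    calc (((δ-1)/(q-1)) * (p-1) * a / (lam+v)) * G p q t * (η ^ q / R)
        ≤ D * (t ^ p + t ^ q) * (η ^ q / R) :=
          mul_le_mul_of_nonneg_right h1 (by positivity)
      _ = D * η ^ q / R * (t ^ p + t ^ q) := by ring
  -- Term 2 lower bound
  have hβ0 : 0 ≤ q * Phi p q δ lam v * η ^ (q-1) := by
    have hPhi0 : 0 ≤ Phi p q δ lam v := by
      have h1 : (gbar p q lam / gbar p q (lam+v)) ^ ((δ-1)/(q-1)) ≤ 1 :=
        Real.rpow_le_one (by positivity) ((div_le_one hu).mpr hcu) hM.le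
      unfold Phi; linarith
    positivity
  have hβle : q * Phi p q δ lam v * η ^ (q-1) ≤ q * η ^ (q-1) := by
    have hPhi1 : Phi p q δ lam v ≤ 1 := by
      have h1 : 0 ≤ (gbar p q lam / gbar p q (lam+v)) ^ ((δ-1)/(q-1)) :=
        Real.rpow_nonneg (by positivity) _
      unfold Phi; linarith
    have hηq : 0 ≤ η ^ (q-1) := Real.rpow_nonneg hη0 _
    calc q * Phi p q δ lam v * η ^ (q-1) = (q * η ^ (q-1)) * Phi p q δ lam v := by ring
      _ ≤ (q * η ^ (q-1)) * 1 := by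
          apply mul_le_mul_of_nonneg_left hPhi1 (by positivity)
      _ = q * η ^ (q-1) := by ring
  have hip_lb : -(t * (C₀ / R)) ≤ ip := by
    have h1 : |ip| ≤ ‖ξ‖ * ‖e‖ := abs_real_inner_le_norm ξ e
    have h2 : ‖ξ‖ * ‖e‖ ≤ t * (C₀ / R) := by
      rw [← htdef]
      exact mul_le_mul_of_nonneg_left he ht.le
    have := neg_abs_le ip
    linarith
  have hT2 : -(q * C₀ * (t ^ (p-1) + t ^ (q-1)) * η ^ (q-1) / R)
      ≤ q * Phi p q δ lam v * η ^ (q-1) * ((t ^ (p-2) + t ^ (q-2)) * ip) := by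
    have hAip : -((t ^ (p-1) + t ^ (q-1)) * (C₀/R)) ≤ (t ^ (p-2) + t ^ (q-2)) * ip := by
      have h1 := mul_le_mul_of_nonneg_left hip_lb hA0
      calc -((t ^ (p-1) + t ^ (q-1)) * (C₀/R))
          = (t ^ (p-2) + t ^ (q-2)) * (-(t * (C₀/R))) := by rw [← hAt]; ring
        _ ≤ (t ^ (p-2) + t ^ (q-2)) * ip := h1
    have step1 : (q * Phi p q δ lam v * η ^ (q-1)) * (-((t ^ (p-1) + t ^ (q-1)) * (C₀/R)))
        ≤ (q * Phi p q δ lam v * η ^ (q-1)) * ((t ^ (p-2) + t ^ (q-2)) * ip) :=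
      mul_le_mul_of_nonneg_left hAip hβ0
    have hgt0 : 0 ≤ (t ^ (p-1) + t ^ (q-1)) * (C₀/R) := by positivity
    have hneg : -((t ^ (p-1) + t ^ (q-1)) * (C₀/R)) ≤ 0 := neg_nonpos.mpr hgt0
    have step2 : (q * η ^ (q-1)) * (-((t ^ (p-1) + t ^ (q-1)) * (C₀/R)))
        ≤ (q * Phi p q δ lam v * η ^ (q-1)) * (-((t ^ (p-1) + t ^ (q-1)) * (C₀/R))) :=
      mul_le_mul_of_nonpos_right hβle hneg
    calc -(q * C₀ * (t ^ (p-1) + t ^ (q-1)) * η ^ (q-1) / R)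
        = (q * η ^ (q-1)) * (-((t ^ (p-1) + t ^ (q-1)) * (C₀/R))) := by ring
      _ ≤ (q * Phi p q δ lam v * η ^ (q-1)) * (-((t ^ (p-1) + t ^ (q-1)) * (C₀/R))) := step2
      _ ≤ q * Phi p q δ lam v * η ^ (q-1) * ((t ^ (p-2) + t ^ (q-2)) * ip) := step1
  -- absorption inequality
  have habs := absorb hp hpq hδ hC₀ hlam hv ht hη0 hη1
  rw [← hadef] at habs
  have habsR : q * C₀ * (t ^ (p-1) + t ^ (q-1)) * η ^ (q-1) / R
      ≤ ((((δ-1)/(q-1)) * (p-1) / 2) *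
          (a * (G p q t / (lam+v))) * η ^ q
        + (q^2 * C₀ + (((δ-1)/(q-1)) * (p-1) / 2) ^ (1-q) * (q*C₀) ^ q * q ^ q) *
          (gbar p q lam * (gbar p q (lam+v) / gbar p q lam) ^ δ)) / R :=
    (div_le_div_iff_of_pos_right hR).mpr habs
  -- final combination
  have hexpand : (t ^ (p-2) + t ^ (q-2)) *
      (D * η ^ q / R * (t * t) + q * Phi p q δ lam v * η ^ (q-1) * ip)
      = D * η ^ q / R * ((t ^ (p-2) + t ^ (q-2)) * (t * t))
        + q * Phi p q δ lam v * η ^ (q-1) * ((t ^ (p-2) + t ^ (q-2)) * ip) := by ring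
  rw [ge_iff_le, hexpand]
  have e5 : (((δ-1)/(q-1)) * (p-1) * a / (lam+v)) * G p q t * (η ^ q / R)
      = 2 * ((((δ-1)/(q-1)) * (p-1) / 2) * (a * (G p q t / (lam+v))) * η ^ q / R) := by
    ring
  rw [e5] at hT1
  rw [add_div] at habsR
  have hneg2 : -((((δ-1)/(q-1)) * (p-1) / 2) * (a * (G p q t / (lam+v))) * η ^ q / R
        + (q^2 * C₀ + (((δ-1)/(q-1)) * (p-1) / 2) ^ (1-q) * (q*C₀) ^ q * q ^ q) *
          (gbar p q lam * (gbar p q (lam+v) / gbar p q lam) ^ δ) / R)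
      ≤ q * Phi p q δ lam v * η ^ (q-1) * ((t ^ (p-2) + t ^ (q-2)) * ip) :=
    le_trans (neg_le_neg habsR) hT2
  calc (δ-1)/(q-1) * (p-1) / 2 / R * a * (G p q t / (lam+v)) * η ^ q
        - (q^2 * C₀ + ((δ-1)/(q-1) * (p-1) / 2) ^ (1-q) * (q*C₀) ^ q * q ^ q) / R *
            gbar p q lam * (gbar p q (lam+v) / gbar p q lam) ^ δ
      = 2 * ((((δ-1)/(q-1)) * (p-1) / 2) * (a * (G p q t / (lam+v))) * η ^ q / R)
        + -((((δ-1)/(q-1)) * (p-1) / 2) * (a * (G p q t / (lam+v))) * η ^ q / R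
            + (q^2 * C₀ + (((δ-1)/(q-1)) * (p-1) / 2) ^ (1-q) * (q*C₀) ^ q * q ^ q) *
              (gbar p q lam * (gbar p q (lam+v) / gbar p q lam) ^ δ) / R) := by ring
    _ ≤ D * η ^ q / R * ((t ^ (p-2) + t ^ (q-2)) * (t * t))
        + q * Phi p q δ lam v * η ^ (q-1) * ((t ^ (p-2) + t ^ (q-2)) * ip) :=
      add_le_add hT1 hneg2
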